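/- The sequence of probability measures (μ_N)_{N∈ℕ} satisfies a Large Deviation Principle on M with rate function I_1(p) = h* − h(p), where h* = sup_{p∈M} h(p). -/

import Mathlib

/- Statement 4: the multinomial measures μ_N on M, with μ_N{n/N} ∝ C(N,n), satisfy
an LDP on M with rate function I_1(p) = h* - h(p), where h* = sup_{p∈M} h(p). -/

open MeasureTheory Filter
open scoped Classical BigOperators ENNReal

/-- The set `M = {p ∈ [0,1]^D : ∑ p_k = 1, ∑ k p_k = 2}`. -/
def MSet (D : ℕ) : Set (EuclideanSpace ℝ (Fin D)) :=
  {p | (∀ i, p i ∈ Set.Icc (0 : ℝ) 1) ∧ (∑ i, p i = 1) ∧ (∑ i, ((i.1 : ℝ) + 1) * p i = 2)}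

/-- The grid point `n/N = (n_1/N, …, n_D/N)`. -/
noncomputable def gridPt (D N : ℕ) (n : Fin D → Fin (N + 1)) : EuclideanSpace ℝ (Fin D) :=
  WithLp.toLp 2 (fun i => ((n i : ℕ) : ℝ) / N)

/-- The normalizing constant `Z′_N = ∑_{n : n/N ∈ M} C(N,n)`. -/
noncomputable def Zgrid (D N : ℕ) : ℝ :=
  ∑ n : Fin D → Fin (N + 1),
    if gridPt D N n ∈ MSet D then
      (Nat.multinomial Finset.univ (fun i => (n i : ℕ)) : ℝ)
    else 0

/-- `μ_N`: the probability measure on `M` giving mass `C(N,n)/Z′_N` to each grid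
point `n/N ∈ M`. -/
noncomputable def muN (D N : ℕ) : Measure (MSet D) :=
  ∑ n : Fin D → Fin (N + 1),
    if h : gridPt D N n ∈ MSet D then
      ENNReal.ofReal ((Nat.multinomial Finset.univ (fun i => (n i : ℕ)) : ℝ) / Zgrid D N) •
        Measure.dirac (⟨gridPt D N n, h⟩ : MSet D)
    else 0

/-- The entropy `h(p) = -∑ p_k ln p_k`. -/
noncomputable def entropy (D : ℕ) (p : EuclideanSpace ℝ (Fin D)) : ℝ :=
  -∑ i, p i * Real.log (p i)

/-- A sequence of (probability) measures on a topological space satisfies the Large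
Deviation Principle with the lower semicontinuous nonnegative rate function `I` if
`limsup (1/N) ln μ_N(C) ≤ -inf_C I` for every closed `C` and
`liminf (1/N) ln μ_N(O) ≥ -inf_O I` for every open `O`. -/
def HasLDP {X : Type*} [TopologicalSpace X] [MeasurableSpace X]
    (μ : ℕ → Measure X) (I : X → ℝ) : Prop :=
  LowerSemicontinuous I ∧ (∀ x, 0 ≤ I x) ∧
  (∀ C : Set X, IsClosed C →
    Filter.limsup (fun N : ℕ => (((N : ℝ)⁻¹ : ℝ) : EReal) * ENNReal.log (μ N C)) atTop
      ≤ -sInf ((fun p => ((I p : ℝ) : EReal)) '' C)) ∧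
  (∀ O : Set X, IsOpen O →
    -sInf ((fun p => ((I p : ℝ) : EReal)) '' O)
      ≤ Filter.liminf (fun N : ℕ => (((N : ℝ)⁻¹ : ℝ) : EReal) * ENNReal.log (μ N O)) atTop)
section Stage1
open Finset

lemma contEval (D : ℕ) (i : Fin D) : Continuous fun p : EuclideanSpace ℝ (Fin D) => p i :=
  (continuous_apply i).comp (PiLp.continuous_ofLp 2 (fun _ : Fin D => ℝ))

lemma entropy_continuous (D : ℕ) : Continuous (entropy D) := by
  unfold entropy
  exact (continuous_finset_sum _ fun i _ =>
    Real.continuous_mul_log.comp (contEval D i)).neg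

lemma isClosed_MSet (D : ℕ) : IsClosed (MSet D) := by
  have h1 : IsClosed {p : EuclideanSpace ℝ (Fin D) | ∀ i, p i ∈ Set.Icc (0:ℝ) 1} := by
    have he : {p : EuclideanSpace ℝ (Fin D) | ∀ i, p i ∈ Set.Icc (0:ℝ) 1}
        = ⋂ i, (fun p : EuclideanSpace ℝ (Fin D) => p i) ⁻¹' (Set.Icc 0 1) := by
      ext p; simp [Set.mem_iInter]
    rw [he]
    exact isClosed_iInter fun i => isClosed_Icc.preimage (contEval D i)
  have h2 : IsClosed {p : EuclideanSpace ℝ (Fin D) | (∑ i, p i) = 1} :=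
    isClosed_eq (continuous_finset_sum _ fun i _ => contEval D i) continuous_const
  have h3 : IsClosed {p : EuclideanSpace ℝ (Fin D) | (∑ i, ((i.1 : ℝ) + 1) * p i) = 2} :=
    isClosed_eq (continuous_finset_sum _ fun i _ => continuous_const.mul (contEval D i))
      continuous_const
  have : MSet D = {p : EuclideanSpace ℝ (Fin D) | ∀ i, p i ∈ Set.Icc (0:ℝ) 1}
      ∩ ({p : EuclideanSpace ℝ (Fin D) | (∑ i, p i) = 1}
        ∩ {p : EuclideanSpace ℝ (Fin D) | (∑ i, ((i.1 : ℝ) + 1) * p i) = 2}) := by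
    ext p; simp [MSet, Set.mem_setOf_eq, and_assoc]
  rw [this]; exact h1.inter (h2.inter h3)

lemma isCompact_MSet (D : ℕ) : IsCompact (MSet D) := by
  refine Metric.isCompact_of_isClosed_isBounded (isClosed_MSet D) ?_
  refine (Metric.isBounded_closedBall (x := (0 : EuclideanSpace ℝ (Fin D))) (r := Real.sqrt D)).subset ?_
  intro p hp
  simp only [Metric.mem_closedBall, dist_zero_right]
  rw [EuclideanSpace.norm_eq]
  have h1 : ∑ i, ‖p i‖ ^ 2 ≤ (D : ℝ) := by
    calc ∑ i, ‖p i‖ ^ 2 ≤ ∑ _i : Fin D, (1:ℝ) := by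
          refine Finset.sum_le_sum fun i _ => ?_
          have := hp.1 i
          rw [Real.norm_eq_abs, abs_of_nonneg this.1]
          nlinarith [this.1, this.2]
      _ = (D : ℝ) := by simp
  exact Real.sqrt_le_sqrt h1

lemma MSet_nonempty (D : ℕ) (hD : 2 ≤ D) : (MSet D).Nonempty := by
  refine ⟨(WithLp.toLp 2 (fun i => if i = (⟨1, by omega⟩ : Fin D) then (1:ℝ) else 0) : EuclideanSpace ℝ (Fin D)), ?_, ?_, ?_⟩
  · intro i
    by_cases h : i = (⟨1, by omega⟩ : Fin D) <;> simp [h]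
  · simp
  · have : ∀ i : Fin D, ((i.1:ℝ)+1) * (if i = (⟨1, by omega⟩ : Fin D) then (1:ℝ) else 0)
        = if i = (⟨1, by omega⟩ : Fin D) then 2 else 0 := by
      intro i
      by_cases h : i = (⟨1, by omega⟩ : Fin D) <;> simp [h] <;> norm_num
    rw [Finset.sum_congr rfl (fun i _ => this i)]
    simp

end Stage1
section Stage2
open Finset

lemma pow_mul_factorial_le (n k : ℕ) : n ^ k * n.factorial ≤ n ^ n * k.factorial := by
  rcases le_total k n with h | h
  · -- n! ≤ k! * n^(n-k)
    have L1 : ∀ m, k ≤ m → m.factorial ≤ k.factorial * m ^ (m - k) := by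
      intro m hm
      induction m with
      | zero => simp_all
      | succ a ih =>
        rcases Nat.eq_or_lt_of_le hm with he | hlt
        · rw [← he]; simp
        · have hk : k ≤ a := Nat.lt_succ_iff.mp hlt
          calc (a+1).factorial = (a+1) * a.factorial := rfl
            _ ≤ (a+1) * (k.factorial * a ^ (a - k)) := Nat.mul_le_mul_left _ (ih hk)
            _ ≤ (a+1) * (k.factorial * (a+1) ^ (a - k)) := by
                exact Nat.mul_le_mul_left _ (Nat.mul_le_mul_left _
                  (Nat.pow_le_pow_left (Nat.le_succ a) _))
            _ = k.factorial * (a+1) ^ (a - k + 1) := by ring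
            _ = k.factorial * (a+1) ^ (a + 1 - k) := by
                rw [Nat.succ_sub hk]
    calc n ^ k * n.factorial ≤ n ^ k * (k.factorial * n ^ (n - k)) :=
          Nat.mul_le_mul_left _ (L1 n h)
      _ = n ^ (k + (n - k)) * k.factorial := by rw [pow_add]; ring
      _ = n ^ n * k.factorial := by congr 2; omega
  · -- n ≤ k : n^(k-n) * n! ≤ k!
    have L2 : ∀ m, n ≤ m → n ^ (m - n) * n.factorial ≤ m.factorial := by
      intro m hm
      induction m with
      | zero => simp_all
      | succ a ih =>
        rcases Nat.eq_or_lt_of_le hm with he | hlt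
        · rw [← he]; simp
        · have hk : n ≤ a := Nat.lt_succ_iff.mp hlt
          have : a + 1 - n = (a - n) + 1 := by omega
          rw [this, pow_succ]
          calc n ^ (a - n) * n * n.factorial = n * (n ^ (a - n) * n.factorial) := by ring
            _ ≤ n * a.factorial := Nat.mul_le_mul_left _ (ih hk)
            _ ≤ (a+1) * a.factorial := Nat.mul_le_mul_right _ (by omega)
            _ = (a+1).factorial := rfl
    calc n ^ k * n.factorial = n ^ n * (n ^ (k - n) * n.factorial) := by
          rw [← mul_assoc, ← pow_add]; congr 2; omega
      _ ≤ n ^ n * k.factorial := Nat.mul_le_mul_left _ (L2 k h)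

/-- the type `n` maximizes `C(N,m) ∏ n_i^{m_i}` among types `m` of total `N`. -/
lemma term_le_term {D N : ℕ} (n k : Fin D → ℕ) (hn : ∑ i, n i = N) (hk : ∑ i, k i = N) :
    Nat.multinomial Finset.univ k * ∏ i, (n i) ^ (k i)
      ≤ Nat.multinomial Finset.univ n * ∏ i, (n i) ^ (n i) := by
  have hP : 0 < (∏ i, (k i).factorial) * ∏ i, (n i).factorial :=
    Nat.mul_pos (Finset.prod_pos fun i _ => (k i).factorial_pos)
      (Finset.prod_pos fun i _ => (n i).factorial_pos)
  refine Nat.le_of_mul_le_mul_right ?_ hP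
  have e1 : (Nat.multinomial Finset.univ k * ∏ i, (n i) ^ (k i))
      * ((∏ i, (k i).factorial) * ∏ i, (n i).factorial)
      = N.factorial * ∏ i, ((n i) ^ (k i) * (n i).factorial) := by
    rw [Finset.prod_mul_distrib]
    have := Nat.multinomial_spec Finset.univ k
    rw [hk] at this
    calc (Nat.multinomial Finset.univ k * ∏ i, (n i) ^ (k i))
        * ((∏ i, (k i).factorial) * ∏ i, (n i).factorial)
        = ((∏ i, (k i).factorial) * Nat.multinomial Finset.univ k)
          * ((∏ i, (n i) ^ (k i)) * ∏ i, (n i).factorial) := by ring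
      _ = N.factorial * ((∏ i, (n i) ^ (k i)) * ∏ i, (n i).factorial) := by rw [this]
  have e2 : (Nat.multinomial Finset.univ n * ∏ i, (n i) ^ (n i))
      * ((∏ i, (k i).factorial) * ∏ i, (n i).factorial)
      = N.factorial * ∏ i, ((n i) ^ (n i) * (k i).factorial) := by
    rw [Finset.prod_mul_distrib]
    have := Nat.multinomial_spec Finset.univ n
    rw [hn] at this
    calc (Nat.multinomial Finset.univ n * ∏ i, (n i) ^ (n i))
        * ((∏ i, (k i).factorial) * ∏ i, (n i).factorial)
        = ((∏ i, (n i).factorial) * Nat.multinomial Finset.univ n)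
          * ((∏ i, (n i) ^ (n i)) * ∏ i, (k i).factorial) := by ring
      _ = N.factorial * ((∏ i, (n i) ^ (n i)) * ∏ i, (k i).factorial) := by rw [this]
  rw [e1, e2]
  exact Nat.mul_le_mul_left _ (Finset.prod_le_prod' fun i _ => pow_mul_factorial_le (n i) (k i))

lemma card_piAntidiag_le (D N : ℕ) :
    (Finset.piAntidiag (Finset.univ : Finset (Fin D)) N).card ≤ (N + 1) ^ D := by
  have : ((Finset.univ : Finset (Fin D → Fin (N+1)))).card = (N+1)^D := by
    rw [Finset.card_univ, Fintype.card_fun]; simp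
  rw [← this]
  refine Finset.card_le_card_of_injOn
    (fun f i => (⟨min (f i) N, by omega⟩ : Fin (N+1))) (fun f _ => Finset.mem_univ _) ?_
  intro f hf g hg hfg
  simp only [Finset.mem_coe, Finset.mem_piAntidiag] at hf hg
  have hfle : ∀ i, f i ≤ N := fun i => hf.1 ▸ Finset.single_le_sum (fun j _ => Nat.zero_le _) (Finset.mem_univ i)
  have hgle : ∀ i, g i ≤ N := fun i => hg.1 ▸ Finset.single_le_sum (fun j _ => Nat.zero_le _) (Finset.mem_univ i)
  funext i
  have := congrFun hfg i
  simpa [Fin.mk.injEq, Nat.min_eq_left (hfle i), Nat.min_eq_left (hgle i)] using this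

end Stage2
section Stage3
open Finset

lemma prod_div_pow_eq_exp {D N : ℕ} (hN : 0 < N) (n : Fin D → ℕ) (hn : ∑ i, n i = N) :
    ∏ i, ((n i : ℝ)/N) ^ (n i)
      = Real.exp (-((N:ℝ) * entropy D (WithLp.toLp 2 (fun i => (n i : ℝ)/N)))) := by
  have hNne : (N:ℝ) ≠ 0 := Nat.cast_ne_zero.mpr hN.ne'
  have key : -((N:ℝ) * entropy D (WithLp.toLp 2 (fun i => (n i : ℝ)/N)))
      = ∑ i, (n i : ℝ) * Real.log ((n i : ℝ)/N) := by
    unfold entropy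
    rw [mul_neg, neg_neg, Finset.mul_sum]
    refine Finset.sum_congr rfl fun i _ => ?_
    field_simp
  rw [key, Real.exp_sum]
  refine Finset.prod_congr rfl fun i _ => ?_
  rcases Nat.eq_zero_or_pos (n i) with h | h
  · simp [h]
  · have hq : 0 < (n i : ℝ)/N := by positivity
    rw [Real.exp_nat_mul, Real.exp_log hq]

lemma mult_le_one {D N : ℕ} (hN : 0 < N) (n : Fin D → ℕ) (hn : ∑ i, n i = N) :
    (Nat.multinomial Finset.univ n : ℝ) * ∏ i, ((n i : ℝ)/N) ^ (n i) ≤ 1 := by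
  have hNne : (N:ℝ) ≠ 0 := Nat.cast_ne_zero.mpr hN.ne'
  have hmem : n ∈ Finset.piAntidiag (Finset.univ : Finset (Fin D)) N := by
    rw [Finset.mem_piAntidiag]; exact ⟨hn, fun i _ => Finset.mem_univ i⟩
  have hsum1 : (∑ i, (n i : ℝ)/N) = 1 := by
    rw [← Finset.sum_div]
    rw [div_eq_one_iff_eq hNne]
    exact_mod_cast hn
  have hthm := Finset.sum_pow_eq_sum_piAntidiag
    (Finset.univ : Finset (Fin D)) (fun i => (n i : ℝ)/N) N
  rw [hsum1, one_pow] at hthm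
  rw [hthm]
  exact Finset.single_le_sum
    (f := fun k : Fin D → ℕ =>
      (Nat.multinomial Finset.univ k : ℝ) * ∏ i, ((n i : ℝ)/N) ^ (k i))
    (fun k _ => by positivity) hmem

lemma one_le_bound {D N : ℕ} (hN : 0 < N) (n : Fin D → ℕ) (hn : ∑ i, n i = N) :
    1 ≤ ((N:ℝ)+1)^D
      * ((Nat.multinomial Finset.univ n : ℝ) * ∏ i, ((n i : ℝ)/N) ^ (n i)) := by
  have hNne : (N:ℝ) ≠ 0 := Nat.cast_ne_zero.mpr hN.ne'
  have hrw : ∀ (m : Fin D → ℕ), (∑ i, m i = N) →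
      (Nat.multinomial Finset.univ m : ℝ) * ∏ i, ((n i : ℝ)/N) ^ (m i)
      = ((Nat.multinomial Finset.univ m * ∏ i, (n i)^(m i) : ℕ) : ℝ) / (N:ℝ)^N := by
    intro m hm
    have h1 : ∏ i, ((n i : ℝ)/N) ^ (m i) = (∏ i, (n i : ℝ) ^ (m i)) / (N:ℝ)^N := by
      have h2 : ∏ i, ((n i : ℝ)/N) ^ (m i)
          = (∏ i, (n i : ℝ) ^ (m i)) / (∏ i, (N:ℝ) ^ (m i)) := by
        rw [← Finset.prod_div_distrib]
        exact Finset.prod_congr rfl fun i _ => div_pow _ _ _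
      rw [h2, Finset.prod_pow_eq_pow_sum, hm]
    rw [h1]
    push_cast
    ring
  have hterm : ∀ k ∈ Finset.piAntidiag (Finset.univ : Finset (Fin D)) N,
      (Nat.multinomial Finset.univ k : ℝ) * ∏ i, ((n i : ℝ)/N) ^ (k i)
        ≤ (Nat.multinomial Finset.univ n : ℝ) * ∏ i, ((n i : ℝ)/N) ^ (n i) := by
    intro k hk
    have hksum : ∑ i, k i = N := (Finset.mem_piAntidiag.mp hk).1
    rw [hrw k hksum, hrw n hn]
    have := term_le_term n k hn hksum
    gcongr
  have hsum1 : (∑ i, (n i : ℝ)/N) = 1 := by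
    rw [← Finset.sum_div, div_eq_one_iff_eq hNne]
    exact_mod_cast hn
  have hthm := Finset.sum_pow_eq_sum_piAntidiag
    (Finset.univ : Finset (Fin D)) (fun i => (n i : ℝ)/N) N
  rw [hsum1, one_pow] at hthm
  have hTnonneg : 0 ≤ (Nat.multinomial Finset.univ n : ℝ) * ∏ i, ((n i : ℝ)/N) ^ (n i) := by
    positivity
  calc (1:ℝ) = ∑ k ∈ Finset.piAntidiag (Finset.univ : Finset (Fin D)) N,
        (Nat.multinomial Finset.univ k : ℝ) * ∏ i, ((n i : ℝ)/N) ^ (k i) := hthm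
    _ ≤ (Finset.piAntidiag (Finset.univ : Finset (Fin D)) N).card
        • ((Nat.multinomial Finset.univ n : ℝ) * ∏ i, ((n i : ℝ)/N) ^ (n i)) :=
        Finset.sum_le_card_nsmul _ _ _ hterm
    _ ≤ ((N:ℝ)+1)^D * ((Nat.multinomial Finset.univ n : ℝ) * ∏ i, ((n i : ℝ)/N) ^ (n i)) := by
        rw [nsmul_eq_mul]
        refine mul_le_mul_of_nonneg_right ?_ hTnonneg
        calc ((Finset.piAntidiag (Finset.univ : Finset (Fin D)) N).card : ℝ)
            ≤ ((N+1)^D : ℕ) := by exact_mod_cast card_piAntidiag_le D N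
          _ = ((N:ℝ)+1)^D := by push_cast; ring

lemma mult_le_exp {D N : ℕ} (hN : 0 < N) (n : Fin D → ℕ) (hn : ∑ i, n i = N) :
    (Nat.multinomial Finset.univ n : ℝ)
      ≤ Real.exp ((N:ℝ) * entropy D (WithLp.toLp 2 (fun i => (n i : ℝ)/N))) := by
  set x := (N:ℝ) * entropy D (WithLp.toLp 2 (fun i => (n i : ℝ)/N)) with hx
  have h := mult_le_one hN n hn
  rw [prod_div_pow_eq_exp hN n hn, ← hx] at h
  calc (Nat.multinomial Finset.univ n : ℝ)
      = (Nat.multinomial Finset.univ n : ℝ) * (Real.exp (-x) * Real.exp x) := by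
        rw [← Real.exp_add, neg_add_cancel, Real.exp_zero, mul_one]
    _ = ((Nat.multinomial Finset.univ n : ℝ) * Real.exp (-x)) * Real.exp x := by ring
    _ ≤ 1 * Real.exp x := mul_le_mul_of_nonneg_right h (Real.exp_pos x).le
    _ = Real.exp x := one_mul _

lemma exp_le_mult {D N : ℕ} (hN : 0 < N) (n : Fin D → ℕ) (hn : ∑ i, n i = N) :
    Real.exp ((N:ℝ) * entropy D (WithLp.toLp 2 (fun i => (n i : ℝ)/N)))
      ≤ ((N:ℝ)+1)^D * (Nat.multinomial Finset.univ n : ℝ) := by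
  set x := (N:ℝ) * entropy D (WithLp.toLp 2 (fun i => (n i : ℝ)/N)) with hx
  have h := one_le_bound hN n hn
  rw [prod_div_pow_eq_exp hN n hn, ← hx] at h
  calc Real.exp x = Real.exp x * 1 := (mul_one _).symm
    _ ≤ Real.exp x * (((N:ℝ)+1)^D
        * ((Nat.multinomial Finset.univ n : ℝ) * Real.exp (-x))) :=
        mul_le_mul_of_nonneg_left h (Real.exp_pos x).le
    _ = ((N:ℝ)+1)^D * (Nat.multinomial Finset.univ n : ℝ)
        * (Real.exp x * Real.exp (-x)) := by ring
    _ = ((N:ℝ)+1)^D * (Nat.multinomial Finset.univ n : ℝ) := by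
        rw [← Real.exp_add, add_neg_cancel, Real.exp_zero, mul_one]

end Stage3
section Stage4
open Finset

lemma grid_approx {D : ℕ} (hD : 2 ≤ D) {p : EuclideanSpace ℝ (Fin D)} (hp : p ∈ MSet D)
    {N : ℕ} (hN : 1 ≤ N) :
    ∃ n : Fin D → Fin (N+1), gridPt D N n ∈ MSet D ∧
      ∀ i, |gridPt D N n i - p i| ≤ ((D:ℝ)+1)^4 / N := by
  have hNpos : (0:ℝ) < N := by exact_mod_cast hN
  have hDr : (2:ℝ) ≤ D := by exact_mod_cast hD
  obtain ⟨hp01, hpsum, hpw⟩ := hp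
  have i0lt : 0 < D := by omega
  have i1lt : 1 < D := by omega
  set i0 : Fin D := ⟨0, i0lt⟩ with hi0def
  set i1 : Fin D := ⟨1, i1lt⟩ with hi1def
  have hi01 : i0 ≠ i1 := by simp [hi0def, hi1def, Fin.ext_iff]
  set a : Fin D → ℕ := fun i => ⌊(N:ℝ) * p i⌋₊ with ha
  have hfl : ∀ i, (a i : ℝ) ≤ (N:ℝ) * p i ∧ (N:ℝ) * p i ≤ (a i : ℝ) + 1 := by
    intro i
    refine ⟨?_, ?_⟩
    · rw [ha]; exact Nat.floor_le (mul_nonneg hNpos.le (hp01 i).1)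
    · rw [ha]; exact (Nat.lt_floor_add_one _).le
  have hw1 : ∑ i, (i.1:ℝ) * p i = 1 := by
    have h1 : ∑ i, ((i.1:ℝ)+1) * p i = (∑ i, (i.1:ℝ) * p i) + ∑ i, p i := by
      rw [← Finset.sum_add_distrib]
      exact Finset.sum_congr rfl fun i _ => by ring
    rw [h1, hpsum] at hpw
    linarith
  have hNw : (N:ℝ) = ∑ i, (i.1:ℝ) * ((N:ℝ) * p i) := by
    have h2 : ∑ i, (i.1:ℝ) * ((N:ℝ) * p i) = (N:ℝ) * ∑ i, (i.1:ℝ) * p i := by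
      rw [Finset.mul_sum]
      exact Finset.sum_congr rfl fun i _ => by ring
    rw [h2, hw1, mul_one]
  set T : ℕ := ∑ i, i.1 * a i with hT
  have hTcast : (T:ℝ) = ∑ i, (i.1:ℝ) * (a i : ℝ) := by
    rw [hT]; push_cast; rfl
  have hTle : (T:ℝ) ≤ N := by
    rw [hTcast, hNw]
    exact Finset.sum_le_sum fun i _ =>
      mul_le_mul_of_nonneg_left (hfl i).1 (by positivity)
  have hTleN : T ≤ N := by exact_mod_cast hTle
  set R : ℕ := N - T with hR
  have hRcast : (R:ℝ) = (N:ℝ) - T := by rw [hR, Nat.cast_sub hTleN]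
  have hRD : (R:ℝ) ≤ (D:ℝ)^2 := by
    rw [hRcast]
    have h3 : (N:ℝ) - T = ∑ i, ((i.1:ℝ) * ((N:ℝ) * p i) - (i.1:ℝ) * (a i : ℝ)) := by
      rw [Finset.sum_sub_distrib, ← hNw, ← hTcast]
    rw [h3]
    calc ∑ i, ((i.1:ℝ) * ((N:ℝ) * p i) - (i.1:ℝ) * (a i : ℝ))
        ≤ ∑ _i : Fin D, (D:ℝ) := by
          refine Finset.sum_le_sum fun i _ => ?_
          have h4 := (hfl i).2
          have h4' := (hfl i).1
          have h5 : (i.1:ℝ) ≤ D := by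
            have h5' : i.1 < D := i.2
            have : (i.1:ℝ) < D := by exact_mod_cast h5'
            linarith
          have h5'' : (0:ℝ) ≤ i.1 := by positivity
          nlinarith
      _ = (D:ℝ) * D := by
          rw [Finset.sum_const, Finset.card_univ, Fintype.card_fin, nsmul_eq_mul]
      _ = (D:ℝ)^2 := by ring
  set m : Fin D → ℕ := Function.update a i1 (a i1 + R) with hm
  have hmw : ∑ i, i.1 * m i = N := by
    have h6 : (fun i => i.1 * m i)
        = Function.update (fun i => i.1 * a i) i1 (i1.1 * (a i1 + R)) := by
      funext j
      by_cases hj : j = i1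
      · subst hj; simp [hm]
      · simp [hm, Function.update_of_ne hj]
    calc ∑ i, i.1 * m i
        = ∑ i, Function.update (fun i => i.1 * a i) i1 (i1.1 * (a i1 + R)) i := by
          rw [h6]
      _ = i1.1 * (a i1 + R) + ∑ i ∈ Finset.univ \ {i1}, i.1 * a i :=
          Finset.sum_update_of_mem (Finset.mem_univ i1) _ _
      _ = N := by
          rw [Finset.sdiff_singleton_eq_erase]
          have h7 : i1.1 * a i1 + ∑ i ∈ Finset.univ.erase i1, i.1 * a i = T :=
            Finset.add_sum_erase _ (fun i : Fin D => i.1 * a i) (Finset.mem_univ i1)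
          have h8 : i1.1 = 1 := rfl
          rw [h8] at h7 ⊢
          omega
  set S : ℕ := ∑ i ∈ Finset.univ.erase i0, m i with hS
  have hmlei : ∀ i, i ≠ i0 → m i ≤ i.1 * m i := by
    intro i hi
    have h1le : 1 ≤ i.1 := by
      rcases Nat.eq_zero_or_pos i.1 with h | h
      · exact absurd (Fin.ext h : i = i0) hi
      · exact h
    calc m i = 1 * m i := (one_mul _).symm
      _ ≤ i.1 * m i := Nat.mul_le_mul_right _ h1le
  have hSle : S ≤ N := by
    rw [hS]
    calc ∑ i ∈ Finset.univ.erase i0, m i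
        ≤ ∑ i ∈ Finset.univ.erase i0, i.1 * m i :=
          Finset.sum_le_sum fun i hi => hmlei i (Finset.ne_of_mem_erase hi)
      _ ≤ ∑ i, i.1 * m i :=
          Finset.sum_le_sum_of_subset (Finset.erase_subset _ _)
      _ = N := hmw
  set n' : Fin D → ℕ := Function.update m i0 (N - S) with hn'
  have hn'sum : ∑ i, n' i = N := by
    calc ∑ i, n' i = (N - S) + ∑ i ∈ Finset.univ \ {i0}, m i :=
          Finset.sum_update_of_mem (Finset.mem_univ i0) _ _
      _ = N := by
          rw [Finset.sdiff_singleton_eq_erase, ← hS]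
          omega
  have hn'w : ∑ i, i.1 * n' i = N := by
    have h9 : (fun i => i.1 * n' i) = fun i => i.1 * m i := by
      funext j
      by_cases hj : j = i0
      · subst hj; simp [hn', hi0def]
      · rw [hn', Function.update_of_ne hj]
    calc ∑ i, i.1 * n' i = ∑ i, i.1 * m i := by rw [h9]
      _ = N := hmw
  have hn'le : ∀ i, n' i ≤ N := by
    intro i
    by_cases hi : i = i0
    · subst hi; rw [hn', Function.update_self]; omega
    · rw [hn', Function.update_of_ne hi]
      calc m i ≤ i.1 * m i := hmlei i hi
        _ ≤ ∑ j, j.1 * m j :=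
            Finset.single_le_sum (f := fun j : Fin D => j.1 * m j)
              (fun j _ => Nat.zero_le _) (Finset.mem_univ i)
        _ = N := hmw
  refine ⟨fun i => ⟨n' i, Nat.lt_succ_of_le (hn'le i)⟩, ?_, ?_⟩
  · simp only [MSet, Set.mem_setOf_eq, gridPt, PiLp.toLp_apply]
    refine ⟨?_, ?_, ?_⟩
    · intro i
      refine ⟨by positivity, ?_⟩
      rw [div_le_one hNpos]
      exact_mod_cast hn'le i
    · rw [← Finset.sum_div, div_eq_one_iff_eq hNpos.ne']
      exact_mod_cast hn'sum
    · have h10 : ∑ i : Fin D, ((i.1:ℝ) + 1) * ((n' i : ℝ) / N)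
          = ((∑ i, (i.1:ℝ) * (n' i : ℝ)) + ∑ i, (n' i : ℝ)) / N := by
        rw [← Finset.sum_add_distrib, Finset.sum_div]
        exact Finset.sum_congr rfl fun i _ => by field_simp
      rw [h10]
      have h11 : ∑ i, (i.1:ℝ) * (n' i : ℝ) = N := by exact_mod_cast hn'w
      have h12 : ∑ i, (n' i : ℝ) = N := by exact_mod_cast hn'sum
      rw [h11, h12]
      field_simp
      ring
  · intro i
    show |(n' i : ℝ) / N - p i| ≤ ((D:ℝ)+1)^4 / N
    have hkey : |(n' i : ℝ) - (N:ℝ) * p i| ≤ ((D:ℝ)+1)^4 →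
        |(n' i : ℝ) / N - p i| ≤ ((D:ℝ)+1)^4 / N := by
      intro hx
      have hrw2 : (n' i : ℝ) / N - p i = ((n' i : ℝ) - (N:ℝ) * p i) / N := by
        field_simp
      rw [hrw2, abs_div, abs_of_pos hNpos]
      exact (div_le_div_iff_of_pos_right hNpos).mpr hx
    apply hkey
    by_cases hi : i = i0
    · subst hi
      have hcast : (n' i0 : ℝ) = (N:ℝ) - S := by
        rw [hn', Function.update_self, Nat.cast_sub hSle]
      have hNp : (N:ℝ) * p i0 = (N:ℝ) - ∑ j ∈ Finset.univ.erase i0, (N:ℝ) * p j := by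
        have h13 : (N:ℝ) * p i0 + ∑ j ∈ Finset.univ.erase i0, (N:ℝ) * p j
            = ∑ j, (N:ℝ) * p j :=
            Finset.add_sum_erase _ (fun j : Fin D => (N:ℝ) * p j) (Finset.mem_univ i0)
        have h14 : ∑ j, (N:ℝ) * p j = N := by rw [← Finset.mul_sum, hpsum, mul_one]
        linarith
      have hScast : (S:ℝ) = ∑ j ∈ Finset.univ.erase i0, (m j : ℝ) := by
        rw [hS]; push_cast; rfl
      have h15 : (n' i0 : ℝ) - (N:ℝ) * p i0
          = ∑ j ∈ Finset.univ.erase i0, ((N:ℝ) * p j - (m j : ℝ)) := by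
        rw [hcast, hNp, Finset.sum_sub_distrib, ← hScast]
        ring
      rw [h15]
      have hmb : ∀ j, (a j : ℝ) ≤ (m j : ℝ) ∧ (m j : ℝ) ≤ (a j : ℝ) + (R:ℝ) := by
        intro j
        by_cases hj : j = i1
        · subst hj
          rw [hm, Function.update_self]
          push_cast
          exact ⟨by linarith [(Nat.cast_nonneg R : (0:ℝ) ≤ (R:ℝ))], le_refl _⟩
        · rw [hm, Function.update_of_ne hj]
          exact ⟨le_refl _, by linarith [(Nat.cast_nonneg R : (0:ℝ) ≤ (R:ℝ))]⟩
      have hcard : ((Finset.univ.erase i0).card : ℝ) ≤ D := by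
        have hc1 : (Finset.univ.erase i0).card ≤ D := by
          calc (Finset.univ.erase i0).card ≤ (Finset.univ : Finset (Fin D)).card :=
                Finset.card_le_card (Finset.erase_subset _ _)
            _ = D := by rw [Finset.card_univ, Fintype.card_fin]
        exact_mod_cast hc1
      have hub : ∑ j ∈ Finset.univ.erase i0, ((N:ℝ) * p j - (m j : ℝ)) ≤ (D:ℝ) := by
        calc ∑ j ∈ Finset.univ.erase i0, ((N:ℝ) * p j - (m j : ℝ))
            ≤ ∑ _j ∈ Finset.univ.erase i0, (1:ℝ) :=
              Finset.sum_le_sum fun j _ => by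
                have := (hfl j).2; have := (hmb j).1; linarith
          _ = ((Finset.univ.erase i0).card : ℝ) := by
              rw [Finset.sum_const, nsmul_eq_mul, mul_one]
          _ ≤ D := hcard
      have hlb : -((D:ℝ) * (D:ℝ)^2)
          ≤ ∑ j ∈ Finset.univ.erase i0, ((N:ℝ) * p j - (m j : ℝ)) := by
        have hstep : ∑ _j ∈ Finset.univ.erase i0, (-(D:ℝ)^2)
            ≤ ∑ j ∈ Finset.univ.erase i0, ((N:ℝ) * p j - (m j : ℝ)) :=
          Finset.sum_le_sum fun j _ => by
            have := (hfl j).1; have := (hmb j).2; linarith [hRD]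
        have h16 : ∑ _j ∈ Finset.univ.erase i0, (-(D:ℝ)^2)
            = -(((Finset.univ.erase i0).card : ℝ) * (D:ℝ)^2) := by
          rw [Finset.sum_const, nsmul_eq_mul]; ring
        rw [h16] at hstep
        have h17 : ((Finset.univ.erase i0).card : ℝ) * (D:ℝ)^2 ≤ (D:ℝ) * (D:ℝ)^2 :=
          mul_le_mul_of_nonneg_right hcard (sq_nonneg _)
        linarith
      rw [abs_le]
      have hd0 : (0:ℝ) ≤ D := by linarith
      have hd1 : (1:ℝ) ≤ (D:ℝ)+1 := by linarith
      have hB2 : (D:ℝ) ≤ ((D:ℝ)+1)^4 :=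
        le_trans (by linarith) (le_self_pow₀ hd1 (by norm_num))
      have hB3 : (D:ℝ)*(D:ℝ)^2 ≤ ((D:ℝ)+1)^4 := by
        have e1 : (D:ℝ)*(D:ℝ)^2 = (D:ℝ)^3 := by ring
        rw [e1]
        calc (D:ℝ)^3 ≤ ((D:ℝ)+1)^3 := pow_le_pow_left₀ hd0 (by linarith) 3
          _ ≤ ((D:ℝ)+1)^4 := pow_le_pow_right₀ hd1 (by norm_num)
      constructor <;> linarith
    · have hd1 : (1:ℝ) ≤ (D:ℝ)+1 := by linarith
      have hB1 : (1:ℝ) ≤ ((D:ℝ)+1)^4 := one_le_pow₀ hd1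
      have hB4 : (D:ℝ)^2 + 1 ≤ ((D:ℝ)+1)^4 := by
        calc (D:ℝ)^2 + 1 ≤ ((D:ℝ)+1)^2 := by nlinarith
          _ ≤ ((D:ℝ)+1)^4 := pow_le_pow_right₀ hd1 (by norm_num)
      have hRpos : (0:ℝ) ≤ (R:ℝ) := Nat.cast_nonneg R
      by_cases hii1 : i = i1
      · subst hii1
        have hcast : (n' i1 : ℝ) = (a i1 : ℝ) + (R:ℝ) := by
          rw [hn', Function.update_of_ne hi, hm, Function.update_self]
          push_cast; rfl
        rw [hcast, abs_le]
        constructor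
        · have := (hfl i1).2; linarith
        · have := (hfl i1).1; linarith [hRD]
      · have hcast : (n' i : ℝ) = (a i : ℝ) := by
          rw [hn', Function.update_of_ne hi, hm, Function.update_of_ne hii1]
        rw [hcast, abs_le]
        constructor
        · have := (hfl i).2; linarith
        · have := (hfl i).1; linarith

end Stage4
section Stage5
open Finset

/-- Sum of multinomial weights over grid points lying in `S`. -/
noncomputable def gsum (D N : ℕ) (S : Set (MSet D)) : ℝ :=
  ∑ n : Fin D → Fin (N + 1),
    if h : gridPt D N n ∈ MSet D then
      (if (⟨gridPt D N n, h⟩ : MSet D) ∈ S then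
        (Nat.multinomial Finset.univ (fun i => (n i : ℕ)) : ℝ) else 0)
    else 0

lemma gsum_term_nonneg {D N : ℕ} (S : Set (MSet D)) (n : Fin D → Fin (N+1)) :
    0 ≤ (if h : gridPt D N n ∈ MSet D then
      (if (⟨gridPt D N n, h⟩ : MSet D) ∈ S then
        (Nat.multinomial Finset.univ (fun i => (n i : ℕ)) : ℝ) else 0)
    else 0) := by
  split
  · split
    · positivity
    · exact le_refl 0
  · exact le_refl 0

lemma gsum_nonneg (D N : ℕ) (S : Set (MSet D)) : 0 ≤ gsum D N S :=
  Finset.sum_nonneg fun n _ => gsum_term_nonneg S n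

lemma Zgrid_nonneg (D N : ℕ) : 0 ≤ Zgrid D N := by
  refine Finset.sum_nonneg fun n _ => ?_
  split
  · positivity
  · exact le_refl 0

lemma gsum_le_Zgrid (D N : ℕ) (S : Set (MSet D)) : gsum D N S ≤ Zgrid D N := by
  refine Finset.sum_le_sum fun n _ => ?_
  split
  · split
    · exact le_refl _
    · positivity
  · exact le_refl 0

lemma grid_sum_eq {D N : ℕ} (hN : 1 ≤ N) {n : Fin D → Fin (N+1)}
    (h : gridPt D N n ∈ MSet D) : ∑ i, (n i : ℕ) = N := by
  have hNpos : (0:ℝ) < N := by exact_mod_cast hN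
  have hs := h.2.1
  have hs' : ∑ i, ((n i : ℕ) : ℝ) / N = 1 := hs
  rw [← Finset.sum_div, div_eq_one_iff_eq hNpos.ne'] at hs'
  exact_mod_cast hs'

lemma muN_apply (D N : ℕ) {S : Set (MSet D)} (hS : MeasurableSet S) :
    muN D N S = ENNReal.ofReal (gsum D N S / Zgrid D N) := by
  rw [muN, MeasureTheory.Measure.finset_sum_apply]
  have hterm : ∀ n : Fin D → Fin (N+1),
      (if h : gridPt D N n ∈ MSet D then
        ENNReal.ofReal ((Nat.multinomial Finset.univ (fun i => (n i : ℕ)) : ℝ) / Zgrid D N) •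
          MeasureTheory.Measure.dirac (⟨gridPt D N n, h⟩ : MSet D)
      else 0) S
      = ENNReal.ofReal ((if h : gridPt D N n ∈ MSet D then
          (if (⟨gridPt D N n, h⟩ : MSet D) ∈ S then
            (Nat.multinomial Finset.univ (fun i => (n i : ℕ)) : ℝ) else 0)
        else 0) / Zgrid D N) := by
    intro n
    by_cases h : gridPt D N n ∈ MSet D
    · rw [dif_pos h, dif_pos h]
      rw [MeasureTheory.Measure.smul_apply, MeasureTheory.Measure.dirac_apply' _ hS]
      by_cases hx : (⟨gridPt D N n, h⟩ : MSet D) ∈ S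
      · rw [if_pos hx, Set.indicator_of_mem hx]
        simp
      · rw [if_neg hx, Set.indicator_of_notMem hx]
        simp
    · rw [dif_neg h, dif_neg h]
      simp
  rw [Finset.sum_congr rfl fun n _ => hterm n]
  rw [gsum, Finset.sum_div, ENNReal.ofReal_sum_of_nonneg]
  intro n _
  exact div_nonneg (gsum_term_nonneg S n) (Zgrid_nonneg D N)

lemma one_le_Zgrid {D : ℕ} (hD : 2 ≤ D) {N : ℕ} (hN : 1 ≤ N) : 1 ≤ Zgrid D N := by
  obtain ⟨p, hp⟩ := MSet_nonempty D hD
  obtain ⟨n, hmem, -⟩ := grid_approx hD hp hN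
  calc (1:ℝ) ≤ (Nat.multinomial Finset.univ (fun i => (n i : ℕ)) : ℝ) := by
        exact_mod_cast Nat.multinomial_pos Finset.univ (fun i => (n i : ℕ))
    _ = (if gridPt D N n ∈ MSet D then
          (Nat.multinomial Finset.univ (fun i => (n i : ℕ)) : ℝ) else 0) := by
        rw [if_pos hmem]
    _ ≤ Zgrid D N := by
        refine Finset.single_le_sum (f := fun n : Fin D → Fin (N+1) =>
          (if gridPt D N n ∈ MSet D then
            (Nat.multinomial Finset.univ (fun i => (n i : ℕ)) : ℝ) else 0))
          (fun k _ => ?_) (Finset.mem_univ n)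
        beta_reduce
        split
        · positivity
        · exact le_refl 0

lemma Zgrid_le {D : ℕ} {hs : ℝ} (hbdd : ∀ q ∈ MSet D, entropy D q ≤ hs)
    {N : ℕ} (hN : 1 ≤ N) :
    Zgrid D N ≤ ((N:ℝ)+1)^D * Real.exp (N * hs) := by
  have hNpos : 0 < N := hN
  have hb : ∀ n : Fin D → Fin (N+1), (if gridPt D N n ∈ MSet D then
      (Nat.multinomial Finset.univ (fun i => (n i : ℕ)) : ℝ) else 0)
      ≤ Real.exp (N * hs) := by
    intro n
    split
    · next h =>
      calc (Nat.multinomial Finset.univ (fun i => (n i : ℕ)) : ℝ)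
          ≤ Real.exp ((N:ℝ) * entropy D (WithLp.toLp 2 (fun i => ((n i : ℕ):ℝ)/N))) :=
            mult_le_exp hNpos _ (grid_sum_eq hN h)
        _ ≤ Real.exp (N * hs) := by
            apply Real.exp_le_exp.mpr
            have := hbdd _ h
            have hNge : (0:ℝ) ≤ N := by positivity
            exact mul_le_mul_of_nonneg_left this hNge
    · positivity
  calc Zgrid D N ≤ (Finset.univ : Finset (Fin D → Fin (N+1))).card • Real.exp (N * hs) :=
        Finset.sum_le_card_nsmul _ _ _ (fun n _ => hb n)
    _ = ((N:ℝ)+1)^D * Real.exp (N * hs) := by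
        rw [Finset.card_univ, Fintype.card_fun, Fintype.card_fin, Fintype.card_fin,
          nsmul_eq_mul]
        push_cast
        ring

lemma gsum_le {D : ℕ} {N : ℕ} (hN : 1 ≤ N) {S : Set (MSet D)} {t : ℝ}
    (ht : ∀ x : MSet D, x ∈ S → entropy D x.1 ≤ t) :
    gsum D N S ≤ ((N:ℝ)+1)^D * Real.exp (N * t) := by
  have hNpos : 0 < N := hN
  have hb : ∀ n : Fin D → Fin (N+1), (if h : gridPt D N n ∈ MSet D then
      (if (⟨gridPt D N n, h⟩ : MSet D) ∈ S then
        (Nat.multinomial Finset.univ (fun i => (n i : ℕ)) : ℝ) else 0)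
      else 0) ≤ Real.exp (N * t) := by
    intro n
    split
    · next h =>
      split
      · next hx =>
        calc (Nat.multinomial Finset.univ (fun i => (n i : ℕ)) : ℝ)
            ≤ Real.exp ((N:ℝ) * entropy D (WithLp.toLp 2 (fun i => ((n i : ℕ):ℝ)/N))) :=
              mult_le_exp hNpos _ (grid_sum_eq hN h)
          _ ≤ Real.exp (N * t) := by
              apply Real.exp_le_exp.mpr
              have := ht _ hx
              have hNge : (0:ℝ) ≤ N := by positivity
              exact mul_le_mul_of_nonneg_left this hNge
      · positivity
    · positivity
  calc gsum D N S ≤ (Finset.univ : Finset (Fin D → Fin (N+1))).card • Real.exp (N * t) :=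
        Finset.sum_le_card_nsmul _ _ _ (fun n _ => hb n)
    _ = ((N:ℝ)+1)^D * Real.exp (N * t) := by
        rw [Finset.card_univ, Fintype.card_fun, Fintype.card_fin, Fintype.card_fin,
          nsmul_eq_mul]
        push_cast
        ring

lemma le_gsum {D N : ℕ} (hN : 1 ≤ N) {S : Set (MSet D)} {n : Fin D → Fin (N+1)}
    (h : gridPt D N n ∈ MSet D) (hx : (⟨gridPt D N n, h⟩ : MSet D) ∈ S) :
    Real.exp ((N:ℝ) * entropy D (gridPt D N n)) ≤ ((N:ℝ)+1)^D * gsum D N S := by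
  have hNpos : 0 < N := hN
  calc Real.exp ((N:ℝ) * entropy D (gridPt D N n))
      ≤ ((N:ℝ)+1)^D * (Nat.multinomial Finset.univ (fun i => (n i : ℕ)) : ℝ) :=
        exp_le_mult hNpos _ (grid_sum_eq hN h)
    _ ≤ ((N:ℝ)+1)^D * gsum D N S := by
        refine mul_le_mul_of_nonneg_left ?_ (by positivity)
        calc (Nat.multinomial Finset.univ (fun i => (n i : ℕ)) : ℝ)
            = (if h' : gridPt D N n ∈ MSet D then
                (if (⟨gridPt D N n, h'⟩ : MSet D) ∈ S then
                  (Nat.multinomial Finset.univ (fun i => (n i : ℕ)) : ℝ) else 0)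
              else 0) := by rw [dif_pos h, if_pos hx]
          _ ≤ gsum D N S :=
              Finset.single_le_sum (fun k _ => gsum_term_nonneg S k) (Finset.mem_univ n)

lemma le_Zgrid {D N : ℕ} (hN : 1 ≤ N) {n : Fin D → Fin (N+1)}
    (h : gridPt D N n ∈ MSet D) :
    Real.exp ((N:ℝ) * entropy D (gridPt D N n)) ≤ ((N:ℝ)+1)^D * Zgrid D N := by
  calc Real.exp ((N:ℝ) * entropy D (gridPt D N n))
      ≤ ((N:ℝ)+1)^D * gsum D N Set.univ := le_gsum hN h (Set.mem_univ _)
    _ ≤ ((N:ℝ)+1)^D * Zgrid D N :=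
        mul_le_mul_of_nonneg_left (gsum_le_Zgrid D N _) (by positivity)

end Stage5
section Stage6
open Filter

lemma log_div_tendsto :
    Filter.Tendsto (fun N : ℕ => Real.log ((N:ℝ)+1) / N) Filter.atTop (nhds 0) := by
  have h1 : Tendsto (fun x : ℝ => Real.log x / x) atTop (nhds 0) :=
    Real.isLittleO_log_id_atTop.tendsto_div_nhds_zero
  have h2 : Tendsto (fun N : ℕ => (N:ℝ)+1) atTop atTop :=
    tendsto_atTop_add_const_right atTop 1 tendsto_natCast_atTop_atTop
  have h3 : Tendsto (fun N : ℕ => Real.log ((N:ℝ)+1) / ((N:ℝ)+1)) atTop (nhds 0) :=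
    h1.comp h2
  have h4 : Tendsto (fun N : ℕ => ((N:ℝ)+1)/(N:ℝ)) atTop (nhds 1) := by
    have he : (fun N : ℕ => (1:ℝ) + 1/(N:ℝ)) =ᶠ[atTop] (fun N : ℕ => ((N:ℝ)+1)/(N:ℝ)) := by
      filter_upwards [eventually_ge_atTop 1] with N hN
      have : (N:ℝ) ≠ 0 := by positivity
      field_simp
    refine Tendsto.congr' he ?_
    have := tendsto_one_div_atTop_nhds_zero_nat (𝕜 := ℝ)
    simpa using tendsto_const_nhds.add this
  have h5 := h3.mul h4
  rw [zero_mul] at h5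
  refine Tendsto.congr' ?_ h5
  filter_upwards [eventually_ge_atTop 1] with N hN
  have hN0 : (N:ℝ) ≠ 0 := by positivity
  field_simp

lemma grid_seq {D : ℕ} (hD : 2 ≤ D) {p : EuclideanSpace ℝ (Fin D)} (hp : p ∈ MSet D) :
    ∃ q : (N : ℕ) → (Fin D → Fin (N+1)),
      (∀ N, 1 ≤ N → gridPt D N (q N) ∈ MSet D) ∧
      Filter.Tendsto (fun N => gridPt D N (q N)) Filter.atTop (nhds p) := by
  have h : ∀ N : ℕ, ∃ n : Fin D → Fin (N+1), 1 ≤ N →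
      (gridPt D N n ∈ MSet D ∧ ∀ i, |gridPt D N n i - p i| ≤ ((D:ℝ)+1)^4 / N) := by
    intro N
    by_cases hN : 1 ≤ N
    · obtain ⟨n, h1, h2⟩ := grid_approx hD hp hN
      exact ⟨n, fun _ => ⟨h1, h2⟩⟩
    · exact ⟨fun _ => 0, fun h' => absurd h' hN⟩
  choose q hq using h
  refine ⟨q, fun N hN => (hq N hN).1, ?_⟩
  rw [tendsto_iff_dist_tendsto_zero]
  have hbound : ∀ N : ℕ, 1 ≤ N →
      dist (gridPt D N (q N)) p ≤ (Real.sqrt D * ((D:ℝ)+1)^4) / N := by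
    intro N hN
    have hNpos : (0:ℝ) < N := by exact_mod_cast hN
    rw [EuclideanSpace.dist_eq]
    have h1 : ∑ i, dist (gridPt D N (q N) i) (p i) ^ 2
        ≤ (D:ℝ) * (((D:ℝ)+1)^4/N)^2 := by
      calc ∑ i, dist (gridPt D N (q N) i) (p i) ^ 2
          ≤ ∑ _i : Fin D, (((D:ℝ)+1)^4/N)^2 := by
            refine Finset.sum_le_sum fun i _ => ?_
            have hb := (hq N hN).2 i
            rw [Real.dist_eq]
            have h0 : (0:ℝ) ≤ |gridPt D N (q N) i - p i| := abs_nonneg _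
            nlinarith
        _ = (D:ℝ) * (((D:ℝ)+1)^4/N)^2 := by
            rw [Finset.sum_const, Finset.card_univ, Fintype.card_fin, nsmul_eq_mul]
    calc Real.sqrt (∑ i, dist (gridPt D N (q N) i) (p i) ^ 2)
        ≤ Real.sqrt ((D:ℝ) * (((D:ℝ)+1)^4/N)^2) := Real.sqrt_le_sqrt h1
      _ = Real.sqrt D * (((D:ℝ)+1)^4/N) := by
          rw [Real.sqrt_mul (by positivity), Real.sqrt_sq (by positivity)]
      _ = (Real.sqrt D * ((D:ℝ)+1)^4) / N := by ring
  refine squeeze_zero' ?_ ?_ (tendsto_const_div_atTop_nhds_zero_nat (Real.sqrt D * ((D:ℝ)+1)^4))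
  · exact Filter.Eventually.of_forall fun N => dist_nonneg
  · filter_upwards [Filter.eventually_ge_atTop 1] with N hN
    exact hbound N hN

end Stage6
/-- **Sanov-type LDP** for the multinomial measures `μ_N` on `M`: they satisfy an LDP
with rate function `I_1(p) = h* - h(p)`, where `h* = sup_{p ∈ M} h(p)`. -/
theorem multinomial_measures_LDP (D : ℕ) (hD : 2 ≤ D) :
    HasLDP (fun N => muN D N)
      (fun p : MSet D => sSup (entropy D '' MSet D) - entropy D p) := by
  have hMne : (MSet D).Nonempty := MSet_nonempty D hD
  have hcomp := isCompact_MSet D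
  haveI : CompactSpace (MSet D) := isCompact_iff_compactSpace.mp hcomp
  have hcont := entropy_continuous D
  set hs : ℝ := sSup (entropy D '' MSet D) with hhs
  have hbddA : BddAbove (entropy D '' MSet D) := ((hcomp.image hcont).bddAbove)
  have hle_hs : ∀ q ∈ MSet D, entropy D q ≤ hs := fun q hq => le_csSup hbddA ⟨q, hq, rfl⟩
  obtain ⟨pstar, hpsM, hpsmax⟩ := hcomp.exists_isMaxOn hMne hcont.continuousOn
  have hs_eq : hs = entropy D pstar := by
    refine le_antisymm ?_ (hle_hs _ hpsM)
    rw [hhs]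
    refine csSup_le (hMne.image _) ?_
    rintro _ ⟨x, hx, rfl⟩
    exact hpsmax hx
  obtain ⟨qs, hqsmem, hqsT⟩ := grid_seq hD hpsM
  have heS_T : Filter.Tendsto (fun N : ℕ => entropy D (gridPt D N (qs N)))
      Filter.atTop (nhds hs) := by
    rw [hs_eq]
    exact (hcont.tendsto pstar).comp hqsT
  have hNinv_nonneg : ∀ N : ℕ, (0:EReal) ≤ (((N:ℝ)⁻¹ : ℝ) : EReal) := fun N => by
    have : (0:ℝ) ≤ (N:ℝ)⁻¹ := by positivity
    exact_mod_cast this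
  have hUcalc : ∀ (e : ℕ → ℝ) (c : ℝ), Filter.Tendsto e Filter.atTop (nhds c) →
      Filter.Tendsto (fun N : ℕ =>
        (N:ℝ)⁻¹ * Real.log (((N:ℝ)+1)^(2*D) * Real.exp ((N:ℝ) * e N)))
        Filter.atTop (nhds c) := by
    intro e c hT
    have hev : (fun N : ℕ => (2*(D:ℝ)) * (Real.log ((N:ℝ)+1)/N) + e N) =ᶠ[Filter.atTop]
        (fun N : ℕ =>
          (N:ℝ)⁻¹ * Real.log (((N:ℝ)+1)^(2*D) * Real.exp ((N:ℝ) * e N))) := by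
      filter_upwards [Filter.eventually_ge_atTop 1] with N hN
      have hNpos : (0:ℝ) < N := by exact_mod_cast hN
      rw [Real.log_mul (by positivity) (Real.exp_ne_zero _), Real.log_exp, Real.log_pow]
      push_cast
      field_simp
    refine Filter.Tendsto.congr' hev ?_
    have h0 := (log_div_tendsto.const_mul (2*(D:ℝ))).add hT
    simpa using h0
  have hLcalc : ∀ (e : ℕ → ℝ) (c : ℝ), Filter.Tendsto e Filter.atTop (nhds c) →
      Filter.Tendsto (fun N : ℕ =>
        (N:ℝ)⁻¹ * Real.log (Real.exp ((N:ℝ) * e N) / ((N:ℝ)+1)^(2*D)))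
        Filter.atTop (nhds c) := by
    intro e c hT
    have hev : (fun N : ℕ => e N - (2*(D:ℝ)) * (Real.log ((N:ℝ)+1)/N)) =ᶠ[Filter.atTop]
        (fun N : ℕ =>
          (N:ℝ)⁻¹ * Real.log (Real.exp ((N:ℝ) * e N) / ((N:ℝ)+1)^(2*D))) := by
      filter_upwards [Filter.eventually_ge_atTop 1] with N hN
      have hNpos : (0:ℝ) < N := by exact_mod_cast hN
      rw [Real.log_div (Real.exp_ne_zero _) (by positivity), Real.log_exp, Real.log_pow]
      push_cast
      field_simp
    refine Filter.Tendsto.congr' hev ?_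
    have h0 := hT.sub (log_div_tendsto.const_mul (2*(D:ℝ)))
    simpa using h0
  refine ⟨?_, ?_, ?_, ?_⟩
  · exact (continuous_const.sub (hcont.comp continuous_subtype_val)).lowerSemicontinuous
  · intro x
    exact sub_nonneg.mpr (hle_hs x.1 x.2)
  · -- upper bound for closed sets
    intro C hC
    by_cases hCne : C.Nonempty
    · obtain ⟨x0, hx0C, hx0max⟩ := (hC.isCompact).exists_isMaxOn hCne
        ((hcont.comp continuous_subtype_val).continuousOn)
      show Filter.limsup
          (fun N : ℕ => (((N : ℝ)⁻¹ : ℝ) : EReal) * ENNReal.log (muN D N C)) Filter.atTop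
        ≤ -sInf ((fun p : MSet D => ((hs - entropy D p.1 : ℝ) : EReal)) '' C)
      set t : ℝ := entropy D x0.1 with ht
      have hInf : sInf ((fun p : MSet D => ((hs - entropy D p.1 : ℝ) : EReal)) '' C)
          = ((hs - t : ℝ) : EReal) := by
        apply le_antisymm
        · exact sInf_le ⟨x0, hx0C, rfl⟩
        · refine le_sInf ?_
          rintro b ⟨x, hxC, rfl⟩
          have hxle : entropy D x.1 ≤ t := hx0max hxC
          exact EReal.coe_le_coe_iff.mpr (sub_le_sub_left hxle hs)
      rw [hInf, ← EReal.coe_neg, neg_sub]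
      have huT : Filter.Tendsto (fun N : ℕ =>
          (N:ℝ)⁻¹ * Real.log (((N:ℝ)+1)^(2*D)
            * Real.exp ((N:ℝ) * (t - entropy D (gridPt D N (qs N))))))
          Filter.atTop (nhds (t - hs)) :=
        hUcalc _ _ (tendsto_const_nhds.sub heS_T)
      have hev : ∀ᶠ N : ℕ in Filter.atTop,
          (((N:ℝ)⁻¹ : ℝ) : EReal) * ENNReal.log (muN D N C)
          ≤ (((N:ℝ)⁻¹ * Real.log (((N:ℝ)+1)^(2*D)
              * Real.exp ((N:ℝ) * (t - entropy D (gridPt D N (qs N))))) : ℝ) : EReal) := by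
        filter_upwards [Filter.eventually_ge_atTop 1] with N hN
        have hNpos : (0:ℝ) < N := by exact_mod_cast hN
        have hZpos : (0:ℝ) < Zgrid D N := lt_of_lt_of_le one_pos (one_le_Zgrid hD hN)
        have hZl : Real.exp ((N:ℝ) * entropy D (gridPt D N (qs N)))/((N:ℝ)+1)^D
            ≤ Zgrid D N := by
          rw [div_le_iff₀ (by positivity)]
          calc Real.exp ((N:ℝ) * entropy D (gridPt D N (qs N)))
              ≤ ((N:ℝ)+1)^D * Zgrid D N := le_Zgrid hN (hqsmem N hN)
            _ = Zgrid D N * ((N:ℝ)+1)^D := mul_comm _ _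
        have hgu : gsum D N C ≤ ((N:ℝ)+1)^D * Real.exp ((N:ℝ) * t) :=
          gsum_le hN (fun x hx => hx0max hx)
        have hr : gsum D N C / Zgrid D N
            ≤ ((N:ℝ)+1)^(2*D)
              * Real.exp ((N:ℝ) * (t - entropy D (gridPt D N (qs N)))) := by
          have h2 : gsum D N C / Zgrid D N
              ≤ (((N:ℝ)+1)^D * Real.exp ((N:ℝ) * t))
                / (Real.exp ((N:ℝ) * entropy D (gridPt D N (qs N)))/((N:ℝ)+1)^D) :=
            div_le_div₀ (by positivity) hgu (by positivity) hZl
          refine h2.trans (le_of_eq ?_)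
          rw [mul_sub, Real.exp_sub, two_mul, pow_add]
          field_simp
        have hμ : muN D N C ≤ ENNReal.ofReal (((N:ℝ)+1)^(2*D)
            * Real.exp ((N:ℝ) * (t - entropy D (gridPt D N (qs N))))) := by
          rw [muN_apply D N hC.measurableSet]
          exact ENNReal.ofReal_le_ofReal hr
        have hlogμ : ENNReal.log (muN D N C)
            ≤ ((Real.log (((N:ℝ)+1)^(2*D)
              * Real.exp ((N:ℝ) * (t - entropy D (gridPt D N (qs N))))) : ℝ) : EReal) := by
          rw [← ENNReal.log_ofReal_of_pos (by positivity)]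
          exact ENNReal.log_le_log_iff.mpr hμ
        calc (((N:ℝ)⁻¹ : ℝ) : EReal) * ENNReal.log (muN D N C)
            ≤ (((N:ℝ)⁻¹ : ℝ) : EReal) * ((Real.log (((N:ℝ)+1)^(2*D)
              * Real.exp ((N:ℝ) * (t - entropy D (gridPt D N (qs N))))) : ℝ) : EReal) :=
              mul_le_mul_of_nonneg_left hlogμ (hNinv_nonneg N)
          _ = _ := by rw [← EReal.coe_mul]
      calc Filter.limsup
            (fun N : ℕ => (((N : ℝ)⁻¹ : ℝ) : EReal) * ENNReal.log (muN D N C)) Filter.atTop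
          ≤ Filter.limsup (fun N : ℕ => (((N:ℝ)⁻¹ * Real.log (((N:ℝ)+1)^(2*D)
              * Real.exp ((N:ℝ) * (t - entropy D (gridPt D N (qs N))))) : ℝ) : EReal))
              Filter.atTop := Filter.limsup_le_limsup hev
        _ = ((t - hs : ℝ) : EReal) := (EReal.tendsto_coe.mpr huT).limsup_eq
    · rw [Set.not_nonempty_iff_eq_empty] at hCne
      rw [hCne, Set.image_empty, sInf_empty]
      have hev : ∀ᶠ N : ℕ in Filter.atTop,
          (((N:ℝ)⁻¹ : ℝ) : EReal) * ENNReal.log (muN D N (∅ : Set (MSet D)))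
            = (⊥ : EReal) := by
        filter_upwards [Filter.eventually_ge_atTop 1] with N hN
        have hNpos : (0:ℝ) < (N:ℝ)⁻¹ := by
          have : (0:ℝ) < N := by exact_mod_cast hN
          positivity
        rw [measure_empty, ENNReal.log_zero, EReal.coe_mul_bot_of_pos hNpos]
      rw [Filter.limsup_congr hev, Filter.limsup_const]
      simp
  · -- lower bound for open sets
    intro O hO
    show -sInf ((fun p : MSet D => ((hs - entropy D p.1 : ℝ) : EReal)) '' O)
      ≤ Filter.liminf
          (fun N : ℕ => (((N : ℝ)⁻¹ : ℝ) : EReal) * ENNReal.log (muN D N O)) Filter.atTop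
    rw [EReal.neg_le]
    refine le_sInf ?_
    rintro b ⟨x, hxO, rfl⟩
    rw [EReal.neg_le, ← EReal.coe_neg, neg_sub]
    obtain ⟨qo, hqomem, hqoT⟩ := grid_seq hD x.2
    have heO_T : Filter.Tendsto (fun N : ℕ => entropy D (gridPt D N (qo N)))
        Filter.atTop (nhds (entropy D x.1)) := (hcont.tendsto _).comp hqoT
    have hyT : Filter.Tendsto
        (fun N : ℕ => if h : 1 ≤ N then (⟨gridPt D N (qo N), hqomem N h⟩ : MSet D) else x)
        Filter.atTop (nhds x) := by
      rw [tendsto_subtype_rng]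
      refine Filter.Tendsto.congr' ?_ hqoT
      filter_upwards [Filter.eventually_ge_atTop 1] with N hN
      rw [dif_pos hN]
    have hevO : ∀ᶠ N : ℕ in Filter.atTop,
        (if h : 1 ≤ N then (⟨gridPt D N (qo N), hqomem N h⟩ : MSet D) else x) ∈ O :=
      hyT.eventually_mem (hO.mem_nhds hxO)
    have hvT : Filter.Tendsto (fun N : ℕ =>
        (N:ℝ)⁻¹ * Real.log (Real.exp ((N:ℝ) * (entropy D (gridPt D N (qo N)) - hs))
          / ((N:ℝ)+1)^(2*D)))
        Filter.atTop (nhds (entropy D x.1 - hs)) :=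
      hLcalc _ _ (heO_T.sub tendsto_const_nhds)
    have hev : ∀ᶠ N : ℕ in Filter.atTop,
        (((N:ℝ)⁻¹ * Real.log (Real.exp ((N:ℝ) * (entropy D (gridPt D N (qo N)) - hs))
          / ((N:ℝ)+1)^(2*D)) : ℝ) : EReal)
        ≤ (((N:ℝ)⁻¹ : ℝ) : EReal) * ENNReal.log (muN D N O) := by
      filter_upwards [Filter.eventually_ge_atTop 1, hevO] with N hN hNO
      have hNpos : (0:ℝ) < N := by exact_mod_cast hN
      have hZpos : (0:ℝ) < Zgrid D N := lt_of_lt_of_le one_pos (one_le_Zgrid hD hN)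
      have hmem := hqomem N hN
      have hxmem : (⟨gridPt D N (qo N), hmem⟩ : MSet D) ∈ O := by
        rw [dif_pos hN] at hNO
        exact hNO
      have hgl : Real.exp ((N:ℝ) * entropy D (gridPt D N (qo N)))/((N:ℝ)+1)^D
          ≤ gsum D N O := by
        rw [div_le_iff₀ (by positivity)]
        calc Real.exp ((N:ℝ) * entropy D (gridPt D N (qo N)))
            ≤ ((N:ℝ)+1)^D * gsum D N O := le_gsum hN hmem hxmem
          _ = gsum D N O * ((N:ℝ)+1)^D := mul_comm _ _
      have hZu : Zgrid D N ≤ ((N:ℝ)+1)^D * Real.exp ((N:ℝ) * hs) := Zgrid_le hle_hs hN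
      have hsle : Real.exp ((N:ℝ) * (entropy D (gridPt D N (qo N)) - hs)) / ((N:ℝ)+1)^(2*D)
          ≤ gsum D N O / Zgrid D N := by
        have h2 : (Real.exp ((N:ℝ) * entropy D (gridPt D N (qo N)))/((N:ℝ)+1)^D)
            / (((N:ℝ)+1)^D * Real.exp ((N:ℝ) * hs))
            ≤ gsum D N O / Zgrid D N :=
          div_le_div₀ (gsum_nonneg D N O) hgl hZpos hZu
        refine le_trans (le_of_eq ?_) h2
        rw [mul_sub, Real.exp_sub, two_mul, pow_add]
        field_simp
      have hμ : ENNReal.ofReal (Real.exp ((N:ℝ) * (entropy D (gridPt D N (qo N)) - hs))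
          / ((N:ℝ)+1)^(2*D)) ≤ muN D N O := by
        rw [muN_apply D N hO.measurableSet]
        exact ENNReal.ofReal_le_ofReal hsle
      have hlog : ((Real.log (Real.exp ((N:ℝ) * (entropy D (gridPt D N (qo N)) - hs))
          / ((N:ℝ)+1)^(2*D)) : ℝ) : EReal) ≤ ENNReal.log (muN D N O) := by
        rw [← ENNReal.log_ofReal_of_pos (by positivity)]
        exact ENNReal.log_le_log_iff.mpr hμ
      calc (((N:ℝ)⁻¹ * Real.log (Real.exp ((N:ℝ) * (entropy D (gridPt D N (qo N)) - hs))
            / ((N:ℝ)+1)^(2*D)) : ℝ) : EReal)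
          = (((N:ℝ)⁻¹ : ℝ) : EReal) * ((Real.log (Real.exp ((N:ℝ)
              * (entropy D (gridPt D N (qo N)) - hs)) / ((N:ℝ)+1)^(2*D)) : ℝ) : EReal) := by
            rw [← EReal.coe_mul]
        _ ≤ (((N:ℝ)⁻¹ : ℝ) : EReal) * ENNReal.log (muN D N O) :=
            mul_le_mul_of_nonneg_left hlog (hNinv_nonneg N)
    calc ((entropy D x.1 - hs : ℝ) : EReal)
        = Filter.liminf (fun N : ℕ =>
            (((N:ℝ)⁻¹ * Real.log (Real.exp ((N:ℝ)
              * (entropy D (gridPt D N (qo N)) - hs)) / ((N:ℝ)+1)^(2*D)) : ℝ) : EReal))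
            Filter.atTop := ((EReal.tendsto_coe.mpr hvT).liminf_eq).symm
      _ ≤ Filter.liminf
            (fun N : ℕ => (((N : ℝ)⁻¹ : ℝ) : EReal) * ENNReal.log (muN D N O))
            Filter.atTop := Filter.liminf_le_liminf hev
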